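/- arXiv:2510.11862 — 5 statements merged into one kernel-verified Lean document; each statement's English description precedes it below -/
import Mathlib

section
/- Let ℓ, k be positive integers, n = ℓ + k, and for an ℓ×k complex matrix X let N_X denote the n×n block matrix (0 X; 0 0) (top-left ℓ×ℓ block zero, top-right block X, bottom blocks zero, with rows and columns indexed by Fin ℓ ⊕ Fin k). For ℓ×k complex matrices X and Y, the matrices N_X and N_Y are conjugate in GL(n,ℂ) (i.e. there exists an invertible n×n matrix P with N_Y = P * N_X * P⁻¹) if and only if rank X = rank Y. In other words, each nilpotent GL(n,ℂ)-conjugacy class meets the block space in exactly one GL(ℓ,ℂ)×GL(k,ℂ)-orbit. -/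
open Matrix

/-- Two linear maps between finite-dimensional spaces over a field with equal rank differ
by automorphisms of domain and codomain. -/
theorem aux_exists_equiv_of_finrank_range_eq {K V W : Type*} [Field K]
    [AddCommGroup V] [Module K V] [AddCommGroup W] [Module K W]
    [FiniteDimensional K V] [FiniteDimensional K W] (f g : V →ₗ[K] W)
    (h : Module.finrank K (LinearMap.range f) = Module.finrank K (LinearMap.range g)) :
    ∃ (e₁ : V ≃ₗ[K] V) (e₂ : W ≃ₗ[K] W),
      g = e₂.toLinearMap ∘ₗ f ∘ₗ e₁.toLinearMap := by
  obtain ⟨Cf, hCf⟩ := Submodule.exists_isCompl (LinearMap.ker f)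
  obtain ⟨Cg, hCg⟩ := Submodule.exists_isCompl (LinearMap.ker g)
  obtain ⟨Df, hDf⟩ := Submodule.exists_isCompl (LinearMap.range f)
  obtain ⟨Dg, hDg⟩ := Submodule.exists_isCompl (LinearMap.range g)
  have hkerdim : Module.finrank K (LinearMap.ker f) = Module.finrank K (LinearMap.ker g) := by
    have h1 := f.finrank_range_add_finrank_ker
    have h2 := g.finrank_range_add_finrank_ker
    omega
  have hCdim : Module.finrank K Cf = Module.finrank K Cg := by
    have h1 := Submodule.finrank_add_eq_of_isCompl hCf
    have h2 := Submodule.finrank_add_eq_of_isCompl hCg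
    omega
  have hDdim : Module.finrank K Df = Module.finrank K Dg := by
    have h1 := Submodule.finrank_add_eq_of_isCompl hDf
    have h2 := Submodule.finrank_add_eq_of_isCompl hDg
    omega
  let κ : (LinearMap.ker f) ≃ₗ[K] (LinearMap.ker g) := LinearEquiv.ofFinrankEq _ _ hkerdim
  let γ : Cf ≃ₗ[K] Cg := LinearEquiv.ofFinrankEq _ _ hCdim
  let ψ : Df ≃ₗ[K] Dg := LinearEquiv.ofFinrankEq _ _ hDdim
  let ρf : Cf ≃ₗ[K] LinearMap.range f :=
    (Submodule.quotientEquivOfIsCompl _ _ hCf).symm ≪≫ₗ f.quotKerEquivRange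
  let ρg : Cg ≃ₗ[K] LinearMap.range g :=
    (Submodule.quotientEquivOfIsCompl _ _ hCg).symm ≪≫ₗ g.quotKerEquivRange
  have hρf : ∀ c : Cf, (ρf c : W) = f c := fun c => f.quotKerEquivRange_apply_mk c
  have hρg : ∀ c : Cg, (ρg c : W) = g c := fun c => g.quotKerEquivRange_apply_mk c
  let φ : (LinearMap.range f) ≃ₗ[K] (LinearMap.range g) := ρf.symm ≪≫ₗ γ ≪≫ₗ ρg
  let e₁ : V ≃ₗ[K] V :=
    (Submodule.prodEquivOfIsCompl _ _ hCf).symm ≪≫ₗ (κ.prodCongr γ) ≪≫ₗ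
      Submodule.prodEquivOfIsCompl _ _ hCg
  let e₂ : W ≃ₗ[K] W :=
    (Submodule.prodEquivOfIsCompl _ _ hDf).symm ≪≫ₗ (φ.prodCongr ψ) ≪≫ₗ
      Submodule.prodEquivOfIsCompl _ _ hDg
  have key : ∀ v : V, e₂ (f v) = g (e₁ v) := by
    intro v
    have hv : v ∈ (LinearMap.ker f) ⊔ Cf := by rw [hCf.sup_eq_top]; trivial
    obtain ⟨x, hx, c, hc, rfl⟩ := Submodule.mem_sup.mp hv
    have hfx : f x = 0 := hx
    have hd : (Submodule.prodEquivOfIsCompl _ _ hCf).symm (x + c) =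
        (⟨x, hx⟩, ⟨c, hc⟩) := by
      rw [LinearEquiv.symm_apply_eq, Submodule.coe_prodEquivOfIsCompl']
    have he₁ : e₁ (x + c) = ↑(κ ⟨x, hx⟩) + ↑(γ ⟨c, hc⟩) := by
      simp only [e₁, LinearEquiv.trans_apply, hd, LinearEquiv.prodCongr_apply,
        Submodule.coe_prodEquivOfIsCompl']
    have hfc : f c ∈ LinearMap.range f := LinearMap.mem_range_self f c
    have hd2 : (Submodule.prodEquivOfIsCompl _ _ hDf).symm (f c) =
        (⟨f c, hfc⟩, 0) := by
      rw [LinearEquiv.symm_apply_eq, Submodule.coe_prodEquivOfIsCompl']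
      simp
    have hρfc : ρf ⟨c, hc⟩ = ⟨f c, hfc⟩ := Subtype.ext (hρf ⟨c, hc⟩)
    have hφ : (φ ⟨f c, hfc⟩ : W) = g ↑(γ ⟨c, hc⟩) := by
      simp only [φ, LinearEquiv.trans_apply, ← hρfc, LinearEquiv.symm_apply_apply]
      exact hρg _
    have he₂ : e₂ (f (x + c)) = g ↑(γ ⟨c, hc⟩) := by
      rw [map_add, hfx, zero_add]
      simp only [e₂, LinearEquiv.trans_apply, hd2, LinearEquiv.prodCongr_apply,
        Submodule.coe_prodEquivOfIsCompl', map_zero, Submodule.coe_zero, add_zero]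
      exact hφ
    rw [he₂, he₁, map_add]
    have : g ↑(κ ⟨x, hx⟩) = 0 := (κ ⟨x, hx⟩).2
    rw [this, zero_add]
  refine ⟨e₁.symm, e₂, ?_⟩
  ext v
  simp only [LinearMap.comp_apply, LinearEquiv.coe_coe]
  rw [key (e₁.symm v), LinearEquiv.apply_symm_apply]

/-- Matrices of equal rank over a field are equivalent: `Y = A * X * B` with `A, B` invertible
(given with explicit two-sided inverses). -/
theorem aux_exists_mul_mul_of_rank_eq {ℓ k : ℕ} (X Y : Matrix (Fin ℓ) (Fin k) ℂ)
    (h : X.rank = Y.rank) :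
    ∃ (A A' : Matrix (Fin ℓ) (Fin ℓ) ℂ) (B B' : Matrix (Fin k) (Fin k) ℂ),
      A * A' = 1 ∧ A' * A = 1 ∧ B * B' = 1 ∧ B' * B = 1 ∧ Y = A * X * B := by
  have h' : Module.finrank ℂ (LinearMap.range X.mulVecLin) =
      Module.finrank ℂ (LinearMap.range Y.mulVecLin) := h
  obtain ⟨e₁, e₂, hg⟩ := aux_exists_equiv_of_finrank_range_eq X.mulVecLin Y.mulVecLin h'
  refine ⟨LinearMap.toMatrix' e₂.toLinearMap, LinearMap.toMatrix' e₂.symm.toLinearMap,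
    LinearMap.toMatrix' e₁.toLinearMap, LinearMap.toMatrix' e₁.symm.toLinearMap,
    ?_, ?_, ?_, ?_, ?_⟩
  · rw [← LinearMap.toMatrix'_comp]
    have : e₂.toLinearMap ∘ₗ e₂.symm.toLinearMap = LinearMap.id := by ext v; simp
    rw [this, LinearMap.toMatrix'_id]
  · rw [← LinearMap.toMatrix'_comp]
    have : e₂.symm.toLinearMap ∘ₗ e₂.toLinearMap = LinearMap.id := by ext v; simp
    rw [this, LinearMap.toMatrix'_id]
  · rw [← LinearMap.toMatrix'_comp]
    have : e₁.toLinearMap ∘ₗ e₁.symm.toLinearMap = LinearMap.id := by ext v; simp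
    rw [this, LinearMap.toMatrix'_id]
  · rw [← LinearMap.toMatrix'_comp]
    have : e₁.symm.toLinearMap ∘ₗ e₁.toLinearMap = LinearMap.id := by ext v; simp
    rw [this, LinearMap.toMatrix'_id]
  · have := congrArg LinearMap.toMatrix' hg
    rw [LinearMap.toMatrix'_comp, LinearMap.toMatrix'_comp] at this
    rw [show LinearMap.toMatrix' Y.mulVecLin = Y from
        LinearMap.toMatrix'_toLin' Y,
      show LinearMap.toMatrix' X.mulVecLin = X from LinearMap.toMatrix'_toLin' X] at this
    rw [this, Matrix.mul_assoc]

/-- The rank of the block matrix `(0 X; 0 0)` equals the rank of `X`. -/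
theorem aux_rank_fromBlocks {ℓ k : ℕ} (X : Matrix (Fin ℓ) (Fin k) ℂ) :
    (Matrix.fromBlocks (0 : Matrix (Fin ℓ) (Fin ℓ) ℂ) X (0 : Matrix (Fin k) (Fin ℓ) ℂ)
      (0 : Matrix (Fin k) (Fin k) ℂ)).rank = X.rank := by
  apply le_antisymm
  · have hrep : Matrix.fromBlocks (0 : Matrix (Fin ℓ) (Fin ℓ) ℂ) X (0 : Matrix (Fin k) (Fin ℓ) ℂ)
        (0 : Matrix (Fin k) (Fin k) ℂ) =
        fromRows (1 : Matrix (Fin ℓ) (Fin ℓ) ℂ) (0 : Matrix (Fin k) (Fin ℓ) ℂ) *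
          (X * fromCols (0 : Matrix (Fin k) (Fin ℓ) ℂ) (1 : Matrix (Fin k) (Fin k) ℂ)) := by
      rw [mul_fromCols, fromRows_mul, Matrix.mul_zero, Matrix.mul_one, Matrix.one_mul,
        Matrix.zero_mul, ← fromCols_zero, fromRows_fromCols_eq_fromBlocks]
    rw [hrep]
    exact (Matrix.rank_mul_le_right _ _).trans (Matrix.rank_mul_le_left _ _)
  · have hrep : X =
        fromCols (1 : Matrix (Fin ℓ) (Fin ℓ) ℂ) (0 : Matrix (Fin ℓ) (Fin k) ℂ) *
          Matrix.fromBlocks (0 : Matrix (Fin ℓ) (Fin ℓ) ℂ) X (0 : Matrix (Fin k) (Fin ℓ) ℂ)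
            (0 : Matrix (Fin k) (Fin k) ℂ) *
          fromRows (0 : Matrix (Fin ℓ) (Fin k) ℂ) (1 : Matrix (Fin k) (Fin k) ℂ) := by
      rw [fromCols_mul_fromBlocks]
      simp only [Matrix.one_mul, Matrix.zero_mul, Matrix.mul_zero, add_zero, zero_add]
      rw [fromCols_mul_fromRows, Matrix.mul_zero, Matrix.mul_one, zero_add]
    conv_lhs => rw [hrep]
    exact (Matrix.rank_mul_le_left _ _).trans (Matrix.rank_mul_le_right _ _)

/-- Let `n = ℓ + k` and, for an `ℓ × k` complex matrix `X`, let `N_X` be the `n × n` block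
matrix `(0 X; 0 0)` (rows and columns indexed by `Fin ℓ ⊕ Fin k`). Then `N_X` and `N_Y` are
conjugate in `GL(n, ℂ)` if and only if `rank X = rank Y`. -/
theorem blockNilpotent_conjugate_iff_rank_eq (ℓ k : ℕ) (hℓ : 0 < ℓ) (hk : 0 < k)
    (X Y : Matrix (Fin ℓ) (Fin k) ℂ) :
    (∃ P : GL (Fin ℓ ⊕ Fin k) ℂ,
      Matrix.fromBlocks 0 Y 0 0 =
        (P : Matrix (Fin ℓ ⊕ Fin k) (Fin ℓ ⊕ Fin k) ℂ) * Matrix.fromBlocks 0 X 0 0 *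
          ((P⁻¹ : GL (Fin ℓ ⊕ Fin k) ℂ) : Matrix (Fin ℓ ⊕ Fin k) (Fin ℓ ⊕ Fin k) ℂ)) ↔
    X.rank = Y.rank := by
  constructor
  · rintro ⟨P, hP⟩
    have hdet : IsUnit ((P : Matrix (Fin ℓ ⊕ Fin k) (Fin ℓ ⊕ Fin k) ℂ)).det :=
      (Matrix.isUnit_iff_isUnit_det _).mp P.isUnit
    have hdet' : IsUnit (((P⁻¹ : GL (Fin ℓ ⊕ Fin k) ℂ) :
        Matrix (Fin ℓ ⊕ Fin k) (Fin ℓ ⊕ Fin k) ℂ)).det :=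
      (Matrix.isUnit_iff_isUnit_det _).mp (P⁻¹).isUnit
    have h1 : (Matrix.fromBlocks (0 : Matrix (Fin ℓ) (Fin ℓ) ℂ) Y (0 : Matrix (Fin k) (Fin ℓ) ℂ)
          (0 : Matrix (Fin k) (Fin k) ℂ)).rank =
        (Matrix.fromBlocks (0 : Matrix (Fin ℓ) (Fin ℓ) ℂ) X (0 : Matrix (Fin k) (Fin ℓ) ℂ)
          (0 : Matrix (Fin k) (Fin k) ℂ)).rank := by
      rw [hP, Matrix.rank_mul_eq_left_of_isUnit_det _ _ hdet',
        Matrix.rank_mul_eq_right_of_isUnit_det _ _ hdet]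
    rw [aux_rank_fromBlocks X, aux_rank_fromBlocks Y] at h1
    exact h1.symm
  · intro h
    obtain ⟨A, A', B, B', hAA', hA'A, hBB', hB'B, hY⟩ := aux_exists_mul_mul_of_rank_eq X Y h
    refine ⟨⟨Matrix.fromBlocks A 0 0 B', Matrix.fromBlocks A' 0 0 B, ?_, ?_⟩, ?_⟩
    · rw [Matrix.fromBlocks_multiply]
      simp only [Matrix.mul_zero, Matrix.zero_mul, add_zero, zero_add, hAA', hB'B]
      exact Matrix.fromBlocks_one
    · rw [Matrix.fromBlocks_multiply]
      simp only [Matrix.mul_zero, Matrix.zero_mul, add_zero, zero_add, hA'A, hBB']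
      exact Matrix.fromBlocks_one
    · show Matrix.fromBlocks 0 Y 0 0 =
        Matrix.fromBlocks A 0 0 B' * Matrix.fromBlocks 0 X 0 0 * Matrix.fromBlocks A' 0 0 B
      rw [Matrix.fromBlocks_multiply, Matrix.fromBlocks_multiply]
      simp only [Matrix.mul_zero, Matrix.zero_mul, add_zero, zero_add]
      rw [hY, Matrix.mul_assoc]
end

section
/- Let n be a positive integer, 1 ≤ i ≤ n, and let X_i be the n×n complex matrix given in block form (with blocks of sizes i and n−i) as (1_i 0; 0 0), where 1_i is the i×i identity. An invertible matrix M ∈ GL(n,ℂ) satisfies M * X_i * Mᵀ = X_i if and only if M has block form (A C; 0 B) with A an i×i matrix satisfying A * Aᵀ = 1_i (i.e. A is complex orthogonal), B an invertible (n−i)×(n−i) matrix, and C an arbitrary i×(n−i) matrix. -/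
open Matrix

/-- Let `1 ≤ i ≤ n` and let `X_i` be the `n × n` complex matrix in block form
`(1_i 0; 0 0)` with blocks of sizes `i` and `n - i` (index type `Fin i ⊕ Fin (n - i)`).
An invertible matrix `M ∈ GL(n, ℂ)` satisfies `M * X_i * Mᵀ = X_i` if and only if `M` has
block form `(A C; 0 B)` with `A * Aᵀ = 1_i` (i.e. `A` complex orthogonal), `B` an invertible
`(n-i) × (n-i)` matrix, and `C` an arbitrary `i × (n-i)` matrix. -/
theorem stabilizer_symm_rank_i_iff_block_form (n i : ℕ) (hi1 : 1 ≤ i) (hin : i ≤ n)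
    (M : GL (Fin i ⊕ Fin (n - i)) ℂ) :
    (M : Matrix (Fin i ⊕ Fin (n - i)) (Fin i ⊕ Fin (n - i)) ℂ) *
        Matrix.fromBlocks (1 : Matrix (Fin i) (Fin i) ℂ) 0 0
          (0 : Matrix (Fin (n - i)) (Fin (n - i)) ℂ) *
        (M : Matrix (Fin i ⊕ Fin (n - i)) (Fin i ⊕ Fin (n - i)) ℂ)ᵀ =
      Matrix.fromBlocks (1 : Matrix (Fin i) (Fin i) ℂ) 0 0
        (0 : Matrix (Fin (n - i)) (Fin (n - i)) ℂ) ↔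
    ∃ (A : Matrix (Fin i) (Fin i) ℂ) (B : Matrix (Fin (n - i)) (Fin (n - i)) ℂ)
      (C : Matrix (Fin i) (Fin (n - i)) ℂ),
      A * Aᵀ = 1 ∧ IsUnit B ∧
        (M : Matrix (Fin i ⊕ Fin (n - i)) (Fin i ⊕ Fin (n - i)) ℂ) =
          Matrix.fromBlocks A C 0 B := by
  set N := (M : Matrix (Fin i ⊕ Fin (n - i)) (Fin i ⊕ Fin (n - i)) ℂ) with hN
  constructor
  · intro h
    set A := N.toBlocks₁₁
    set C := N.toBlocks₁₂
    set D := N.toBlocks₂₁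
    set B := N.toBlocks₂₂
    have hblk : N = fromBlocks A C D B := (fromBlocks_toBlocks N).symm
    rw [hblk, fromBlocks_transpose, fromBlocks_multiply, fromBlocks_multiply] at h
    simp only [Matrix.mul_zero, Matrix.zero_mul, Matrix.mul_one, add_zero, zero_add] at h
    have h11 : A * Aᵀ = 1 := (fromBlocks_inj.mp h).1
    have h21 : D * Aᵀ = 0 := (fromBlocks_inj.mp h).2.2.1
    have hAt : Aᵀ * A = 1 := mul_eq_one_comm.mp h11
    have hD : D = 0 := by
      calc D = D * (Aᵀ * A) := by rw [hAt, Matrix.mul_one]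
        _ = (D * Aᵀ) * A := by rw [Matrix.mul_assoc]
        _ = 0 := by rw [h21, Matrix.zero_mul]
    have hblk' : N = fromBlocks A C 0 B := by rw [hblk, hD]
    refine ⟨A, B, C, h11, ?_, hblk'⟩
    have hMdet : IsUnit N.det := by
      exact (Matrix.isUnit_iff_isUnit_det N).mp M.isUnit
    rw [hblk', det_fromBlocks_zero₂₁] at hMdet
    exact (Matrix.isUnit_iff_isUnit_det B).mpr (isUnit_of_mul_isUnit_right hMdet)
  · rintro ⟨A, B, C, hA, hB, hM⟩
    rw [hM, fromBlocks_transpose, fromBlocks_multiply, fromBlocks_multiply]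
    simp [hA]
end

section
/- Let n and i be positive integers with 2i ≤ n, let J = J_{2i} be the standard invertible skew-symmetric 2i×2i matrix (0 1_i; −1_i 0), and let X be the n×n block matrix (J 0; 0 0) with blocks of sizes 2i and n−2i. An invertible matrix M ∈ GL(n,ℂ) satisfies M * X * Mᵀ = X if and only if M has block form (A C; 0 B) with A a 2i×2i matrix satisfying A * J * Aᵀ = J (i.e. A is in the symplectic group Sp(2i,ℂ)), B an invertible (n−2i)×(n−2i) matrix, and C an arbitrary 2i×(n−2i) matrix. -/
open Matrix

/-- The standard invertible skew-symmetric `2i × 2i` complex matrix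
`J_{2i} = (0 1_i; -1_i 0)`, realised on `Fin (2 * i)` via the canonical equivalence
`Fin i ⊕ Fin i ≃ Fin (2 * i)`. -/
noncomputable def Jstd (i : ℕ) : Matrix (Fin (2 * i)) (Fin (2 * i)) ℂ :=
  Matrix.reindex (finSumFinEquiv.trans (finCongr (two_mul i).symm))
    (finSumFinEquiv.trans (finCongr (two_mul i).symm))
    (Matrix.fromBlocks 0 (1 : Matrix (Fin i) (Fin i) ℂ)
      (-1 : Matrix (Fin i) (Fin i) ℂ) 0)

lemma Jstd_mul_transpose (i : ℕ) : Jstd i * (Jstd i)ᵀ = 1 := by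
  unfold Jstd
  rw [Matrix.transpose_reindex, Matrix.reindex_apply, Matrix.reindex_apply,
    Matrix.submatrix_mul_equiv, Matrix.fromBlocks_transpose, Matrix.fromBlocks_multiply]
  simp [Matrix.submatrix_one_equiv]
  exact Matrix.submatrix_one_equiv ((finCongr (two_mul i)).trans finSumFinEquiv.symm)

lemma Jstd_isUnit (i : ℕ) : IsUnit (Jstd i) :=
  ⟨⟨Jstd i, (Jstd i)ᵀ, Jstd_mul_transpose i, mul_eq_one_comm.mp (Jstd_mul_transpose i)⟩, rfl⟩

/-- Let `1 ≤ i` with `2i ≤ n` and let `X` be the `n × n` block matrix `(J_{2i} 0; 0 0)` with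
blocks of sizes `2i` and `n - 2i` (index type `Fin (2i) ⊕ Fin (n - 2i)`). An invertible
matrix `M ∈ GL(n, ℂ)` satisfies `M * X * Mᵀ = X` if and only if `M` has block form
`(A C; 0 B)` with `A * J_{2i} * Aᵀ = J_{2i}` (i.e. `A ∈ Sp(2i, ℂ)`), `B` an invertible
`(n - 2i) × (n - 2i)` matrix, and `C` an arbitrary `2i × (n - 2i)` matrix. -/
theorem stabilizer_skew_rank_2i_iff_block_form (n i : ℕ) (hi1 : 1 ≤ i) (hin : 2 * i ≤ n)
    (M : GL (Fin (2 * i) ⊕ Fin (n - 2 * i)) ℂ) :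
    (M : Matrix (Fin (2 * i) ⊕ Fin (n - 2 * i)) (Fin (2 * i) ⊕ Fin (n - 2 * i)) ℂ) *
        Matrix.fromBlocks (Jstd i) 0 0
          (0 : Matrix (Fin (n - 2 * i)) (Fin (n - 2 * i)) ℂ) *
        (M : Matrix (Fin (2 * i) ⊕ Fin (n - 2 * i)) (Fin (2 * i) ⊕ Fin (n - 2 * i)) ℂ)ᵀ =
      Matrix.fromBlocks (Jstd i) 0 0
        (0 : Matrix (Fin (n - 2 * i)) (Fin (n - 2 * i)) ℂ) ↔
    ∃ (A : Matrix (Fin (2 * i)) (Fin (2 * i)) ℂ)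
      (B : Matrix (Fin (n - 2 * i)) (Fin (n - 2 * i)) ℂ)
      (C : Matrix (Fin (2 * i)) (Fin (n - 2 * i)) ℂ),
      A * Jstd i * Aᵀ = Jstd i ∧ IsUnit B ∧
        (M : Matrix (Fin (2 * i) ⊕ Fin (n - 2 * i)) (Fin (2 * i) ⊕ Fin (n - 2 * i)) ℂ) =
          Matrix.fromBlocks A C 0 B := by
  set Mm := (M : Matrix (Fin (2 * i) ⊕ Fin (n - 2 * i)) (Fin (2 * i) ⊕ Fin (n - 2 * i)) ℂ)
  constructor
  · intro h
    set A := Mm.toBlocks₁₁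
    set C := Mm.toBlocks₁₂
    set D := Mm.toBlocks₂₁
    set B := Mm.toBlocks₂₂
    have hM : Mm = Matrix.fromBlocks A C D B := (Matrix.fromBlocks_toBlocks Mm).symm
    rw [hM, Matrix.fromBlocks_transpose, Matrix.fromBlocks_multiply,
      Matrix.fromBlocks_multiply] at h
    simp only [Matrix.mul_zero, Matrix.zero_mul, add_zero, zero_add] at h
    have h11 : A * Jstd i * Aᵀ = Jstd i := congrArg Matrix.toBlocks₁₁ h
    have h12 : A * Jstd i * Dᵀ = 0 := congrArg Matrix.toBlocks₁₂ h
    have hAJ : IsUnit (A * Jstd i) := by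
      have hdet : IsUnit ((A * Jstd i * Aᵀ).det) := by
        rw [h11]; exact (Matrix.isUnit_iff_isUnit_det _).mp (Jstd_isUnit i)
      rw [Matrix.det_mul] at hdet
      exact (Matrix.isUnit_iff_isUnit_det _).mpr (isUnit_of_mul_isUnit_left hdet)
    have hD : D = 0 := by
      obtain ⟨u, hu⟩ := hAJ
      have h12' : (↑u : Matrix (Fin (2 * i)) (Fin (2 * i)) ℂ) * Dᵀ = 0 := by
        rw [hu]; exact h12
      have : Dᵀ = 0 := by
        calc Dᵀ = (↑u⁻¹ : Matrix (Fin (2 * i)) (Fin (2 * i)) ℂ) * ((u : Matrix (Fin (2 * i)) (Fin (2 * i)) ℂ) * Dᵀ) := by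
                rw [← Matrix.mul_assoc, ← Units.val_mul, inv_mul_cancel u, Units.val_one,
                  Matrix.one_mul]
          _ = 0 := by rw [h12', Matrix.mul_zero]
      simpa using congrArg Matrix.transpose this
    have hMunit : IsUnit Mm := M.isUnit
    have hB : IsUnit B := by
      rw [Matrix.isUnit_iff_isUnit_det] at hMunit ⊢
      rw [hM, hD, Matrix.det_fromBlocks_zero₂₁] at hMunit
      exact isUnit_of_mul_isUnit_right hMunit
    exact ⟨A, B, C, h11, hB, by rw [hM, hD]⟩
  · rintro ⟨A, B, C, hA, hB, hM⟩
    rw [hM, Matrix.fromBlocks_transpose, Matrix.fromBlocks_multiply,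
      Matrix.fromBlocks_multiply]
    simp [hA]
end

section
/- Let n be a positive integer and let i be a natural number with i ≤ n. In the space of symmetric n×n complex matrices (a closed subspace of all n×n matrices with the standard topology), the topological closure of the set {X : Xᵀ = X and rank X = i} equals the set {X : Xᵀ = X and rank X ≤ i}. -/
open Matrix

set_option maxHeartbeats 1000000

section Aux
open Module Submodule Set


/-- From a family spanning a space of dim ≥ k, extract k independent members. -/
lemma aux_exists_indep {K V : Type*} [Field K] [AddCommGroup V] [Module K V]
    {N k : ℕ} (v : Fin N → V) (hk : k ≤ finrank K (span K (Set.range v))) :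
    ∃ g : Fin k → Fin N, Function.Injective g ∧ LinearIndependent K (v ∘ g) := by
  obtain ⟨b, hbsub, hbspan, hbind⟩ := exists_linearIndependent K (Set.range v)
  have hbfin : b.Finite := (Set.finite_range v).subset hbsub
  haveI : Fintype b := hbfin.fintype
  have hcardb : finrank K (span K b) = Fintype.card b := by
    rw [finrank_span_set_eq_card hbind, Set.toFinset_card]
  have hk' : k ≤ Fintype.card b := by
    rw [← hcardb, hbspan]; exact hk
  obtain ⟨e⟩ := Function.Embedding.nonempty_of_card_le (by simpa using hk' : Fintype.card (Fin k) ≤ Fintype.card b)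
  -- choice: each member of b is some v j
  choose c hc using fun x : b => (hbsub x.2 : (x : V) ∈ Set.range v)
  refine ⟨fun a => c (e a), ?_, ?_⟩
  · intro a a' h
    apply e.injective
    apply Subtype.ext
    rw [← hc (e a), ← hc (e a')]
    exact congrArg v h
  · have : (v ∘ fun a => c (e a)) = (fun x : b => (x : V)) ∘ e := by
      ext a; simp [hc (e a)]
    rw [this]
    exact hbind.comp e e.injective

section minors
variable {n k : ℕ}

lemma aux_submatrix_eq_mul (X : Matrix (Fin n) (Fin n) ℂ) (f g : Fin k → Fin n) :
    X.submatrix f g =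
      ((1 : Matrix (Fin n) (Fin n) ℂ).submatrix f id) * X *
        ((1 : Matrix (Fin n) (Fin n) ℂ).submatrix id g) := by
  ext a b
  simp [Matrix.mul_apply, Matrix.one_apply, Finset.sum_ite_eq, Finset.sum_ite_eq']

lemma aux_rank_submatrix_le (X : Matrix (Fin n) (Fin n) ℂ) (f g : Fin k → Fin n) :
    (X.submatrix f g).rank ≤ X.rank := by
  rw [aux_submatrix_eq_mul X f g]
  calc ((1 : Matrix (Fin n) (Fin n) ℂ).submatrix f id * X *
        (1 : Matrix (Fin n) (Fin n) ℂ).submatrix id g).rank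
      ≤ ((1 : Matrix (Fin n) (Fin n) ℂ).submatrix f id * X).rank :=
        Matrix.rank_mul_le_left _ _
    _ ≤ X.rank := Matrix.rank_mul_le_right _ _

/-- a nonzero k×k minor forces rank ≥ k -/
lemma aux_minor_rank (X : Matrix (Fin n) (Fin n) ℂ) (f g : Fin k → Fin n)
    (hdet : (X.submatrix f g).det ≠ 0) : k ≤ X.rank := by
  have h1 : (X.submatrix f g).rank = k := by
    rw [Matrix.rank_of_isUnit _
      ((X.submatrix f g).isUnit_iff_isUnit_det.mpr (isUnit_iff_ne_zero.mpr hdet))]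
    simp
  rw [← h1]
  exact aux_rank_submatrix_le X f g
end minors


/-- rank ≥ k gives k injective column indices with independent columns -/
lemma aux_rank_cols {m N k : ℕ} (X : Matrix (Fin m) (Fin N) ℂ) (hk : k ≤ X.rank) :
    ∃ g : Fin k → Fin N, Function.Injective g ∧ LinearIndependent ℂ (Xᵀ ∘ g) := by
  apply aux_exists_indep
  rw [Matrix.rank_eq_finrank_span_cols] at hk; exact hk

lemma aux_rank_minor {n k : ℕ} (X : Matrix (Fin n) (Fin n) ℂ) (hk : k ≤ X.rank) :
    ∃ f g : Fin k → Fin n, Function.Injective f ∧ Function.Injective g ∧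
      (X.submatrix f g).det ≠ 0 := by
  obtain ⟨g, hg, hcols⟩ := aux_rank_cols X hk
  set C : Matrix (Fin n) (Fin k) ℂ := X.submatrix id g with hC
  have hCrank : C.rank = k := by
    rw [Matrix.rank_eq_finrank_span_cols]
    have : Cᵀ = Xᵀ ∘ g := by ext j i; simp [hC]; rfl
    rw [show C.col = Cᵀ from rfl, this, finrank_span_eq_card hcols, Fintype.card_fin]
  have hCt : k ≤ (Cᵀ).rank := by rw [Matrix.rank_transpose]; exact hCrank.ge
  obtain ⟨f, hf, hrows⟩ := aux_rank_cols Cᵀ hCt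
  refine ⟨f, g, hf, hg, ?_⟩
  -- rows f of C are independent; the square matrix is X.submatrix f g
  have hsq : (X.submatrix f g) = Matrix.of fun a b => ((Cᵀᵀ ∘ f) a) b := by
    ext a b; simp [hC]; rfl
  intro hdet
  -- det = 0 ⇒ dependent rows
  have hdet' : (X.submatrix f g)ᵀ.det = 0 := by rw [Matrix.det_transpose]; exact hdet
  obtain ⟨v, hv0, hv⟩ := (Matrix.exists_mulVec_eq_zero_iff).mpr hdet'
  have := Fintype.linearIndependent_iff.mp hrows v ?_
  · exact hv0 (funext this)
  · ext i
    have h2 := congrFun hv i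
    simp only [Matrix.mulVec, dotProduct, Matrix.transpose_apply,
      Matrix.submatrix_apply] at h2
    simp only [Finset.sum_apply, Pi.smul_apply, Function.comp_apply,
      Matrix.transpose_transpose, smul_eq_mul, hC, Matrix.submatrix_apply, id,
      Pi.zero_apply]
    rw [show (0 : Fin k → ℂ) i = 0 from rfl] at h2
    rw [← h2]
    exact Finset.sum_congr rfl fun x _ => mul_comm _ _



lemma aux_isClosed_rank_le (n i : ℕ) :
    IsClosed {X : Matrix (Fin n) (Fin n) ℂ | X.rank ≤ i} := by
  rw [← isOpen_compl_iff]
  have hset : {X : Matrix (Fin n) (Fin n) ℂ | X.rank ≤ i}ᶜ =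
      ⋃ (f : Fin (i + 1) → Fin n) (g : Fin (i + 1) → Fin n),
        {X : Matrix (Fin n) (Fin n) ℂ | (X.submatrix f g).det ≠ 0} := by
    ext X
    simp only [Set.mem_compl_iff, Set.mem_setOf_eq, not_le, Set.mem_iUnion]
    constructor
    · intro h
      obtain ⟨f, g, _, _, hd⟩ := aux_rank_minor X (Nat.succ_le_of_lt h)
      exact ⟨f, g, hd⟩
    · rintro ⟨f, g, hd⟩
      exact Nat.lt_of_succ_le (aux_minor_rank X f g hd)
  rw [hset]
  refine isOpen_iUnion fun f => isOpen_iUnion fun g => ?_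
  have hc : Continuous fun X : Matrix (Fin n) (Fin n) ℂ => (X.submatrix f g).det :=
    (continuous_id.matrix_submatrix f g).matrix_det
  exact isOpen_compl_singleton.preimage hc

/-- Every complex symmetric matrix is congruent to a diagonal matrix. -/
lemma aux_sym_congr_diag {n : ℕ} (X : Matrix (Fin n) (Fin n) ℂ) (hX : Xᵀ = X) :
    ∃ (Q : Matrix (Fin n) (Fin n) ℂ) (d : Fin n → ℂ), IsUnit Q.det ∧
      X = Qᵀ * diagonal d * Q := by
  set B : LinearMap.BilinForm ℂ (Fin n → ℂ) := Matrix.toLinearMap₂' ℂ X with hB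
  have hBapp : ∀ x y, B x y = ∑ a, ∑ b, x a * X a b * y b := by
    intro x y
    rw [hB, Matrix.toLinearMap₂'_apply]
    refine Finset.sum_congr rfl fun a _ => Finset.sum_congr rfl fun b _ => ?_
    simp [smul_eq_mul]; ring
  have hBsymm : LinearMap.IsSymm B := by
    refine ⟨fun x y => ?_⟩
    simp only [RingHom.id_apply]
    have hs : ∀ a b, X a b = X b a := fun a b => congrFun (congrFun hX b) a
    rw [hBapp, hBapp, Finset.sum_comm]
    refine Finset.sum_congr rfl fun a _ => Finset.sum_congr rfl fun b _ => ?_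
    rw [hs a b]; ring
  obtain ⟨v₀, hv₀⟩ := LinearMap.BilinForm.exists_orthogonal_basis hBsymm
  have hv₀' : ∀ a b, a ≠ b → B (v₀ a) (v₀ b) = 0 := fun a b hab => hv₀ hab
  have hfr : finrank ℂ (Fin n → ℂ) = n := by simp
  let e : Fin (finrank ℂ (Fin n → ℂ)) ≃ Fin n := finCongr hfr
  let v : Basis (Fin n) ℂ (Fin n → ℂ) := v₀.reindex e
  have hvapp : ∀ j, v j = v₀ (e.symm j) := fun j => v₀.reindex_apply e j
  have hortho : ∀ j k : Fin n, j ≠ k → B (v j) (v k) = 0 := by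
    intro j k hjk
    rw [hvapp, hvapp]
    exact hv₀' _ _ (fun h => hjk (by simpa using congrArg e h))
  let P : Matrix (Fin n) (Fin n) ℂ := (Pi.basisFun ℂ (Fin n)).toMatrix v
  have hP : ∀ i j, P i j = v j i := by
    intro i j
    simp [P, Basis.toMatrix_apply]
  have hPu : IsUnit P.det := by
    have := (Pi.basisFun ℂ (Fin n)).invertibleToMatrix v
    exact (Matrix.isUnit_iff_isUnit_det P).mp (isUnit_of_invertible P)
  set D : Matrix (Fin n) (Fin n) ℂ := Pᵀ * X * P with hD
  have hDapp : ∀ j k, D j k = B (v j) (v k) := by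
    intro j k
    rw [hBapp]
    calc D j k = ∑ b, (∑ a, P a j * X a b) * P b k := by
          simp [hD, Matrix.mul_apply, Matrix.transpose_apply]
      _ = ∑ b, ∑ a, P a j * X a b * P b k := by
          simp_rw [Finset.sum_mul]
      _ = ∑ a, ∑ b, P a j * X a b * P b k := Finset.sum_comm
      _ = ∑ a, ∑ b, v j a * X a b * v k b := by
          refine Finset.sum_congr rfl fun a _ => Finset.sum_congr rfl fun b _ => ?_
          rw [hP, hP]
  have hDdiag : D = diagonal (fun j => D j j) := by
    ext j k
    rcases eq_or_ne j k with rfl | hjk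
    · simp [Matrix.diagonal_apply_eq]
    · rw [Matrix.diagonal_apply_ne _ hjk, hDapp]
      exact hortho j k hjk
  refine ⟨P⁻¹, fun j => D j j, Matrix.isUnit_nonsing_inv_det P hPu, ?_⟩
  rw [← hDdiag, Matrix.transpose_nonsing_inv, hD]
  have h1 : Pᵀ⁻¹ * (Pᵀ * X * P) * P⁻¹ = (Pᵀ⁻¹ * Pᵀ) * X * (P * P⁻¹) := by
    noncomm_ring
  rw [h1, Matrix.nonsing_inv_mul _ (by rwa [Matrix.det_transpose]),
    Matrix.mul_nonsing_inv _ hPu, Matrix.one_mul, Matrix.mul_one]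





lemma aux_rank_congr {n : ℕ} (Q A : Matrix (Fin n) (Fin n) ℂ) (hQ : IsUnit Q.det) :
    (Qᵀ * A * Q).rank = A.rank := by
  rw [Matrix.rank_mul_eq_left_of_isUnit_det Q (Qᵀ * A) hQ,
    Matrix.rank_mul_eq_right_of_isUnit_det Qᵀ A (by rwa [Matrix.det_transpose])]

end Aux

/-- In the space of symmetric `n × n` complex matrices (a closed subspace of all `n × n`
matrices with the standard topology), for `i ≤ n`, the topological closure of the set of
symmetric matrices of rank exactly `i` equals the set of symmetric matrices of rank at
most `i`. -/
theorem closure_symm_rank_eq_eq_symm_rank_le (n i : ℕ) (hn : 0 < n) (hi : i ≤ n) :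
    closure {X : Matrix (Fin n) (Fin n) ℂ | Xᵀ = X ∧ X.rank = i} =
      {X : Matrix (Fin n) (Fin n) ℂ | Xᵀ = X ∧ X.rank ≤ i} := by
  classical
  apply Set.Subset.antisymm
  · refine closure_minimal (fun X hX => ⟨hX.1, hX.2.le⟩) ?_
    have h1 : IsClosed {X : Matrix (Fin n) (Fin n) ℂ | Xᵀ = X} :=
      isClosed_eq continuous_id.matrix_transpose continuous_id
    exact h1.inter (aux_isClosed_rank_le n i)
  · rintro X ⟨hsym, hrank⟩
    obtain ⟨Q, d, hQ, hXeq⟩ := aux_sym_congr_diag X hsym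
    -- support of d
    set s : Finset (Fin n) := Finset.univ.filter (fun j => d j ≠ 0) with hs
    have hscard : s.card = X.rank := by
      rw [hXeq, aux_rank_congr Q _ hQ, Matrix.rank_diagonal, Fintype.card_subtype]
    -- choose extra indices among zeros of d
    have hzcard : i - s.card ≤ (Finset.univ.filter (fun j => d j = 0)).card := by
      have htotal : s.card + (Finset.univ.filter (fun j => d j = 0)).card = n := by
        have h := Finset.card_filter_add_card_filter_not
          (s := (Finset.univ : Finset (Fin n))) (p := fun j => d j ≠ 0)
        simp only [ne_eq, not_not, Finset.card_univ, Fintype.card_fin] at h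
        simpa [hs] using h
      omega
    obtain ⟨S, hSsub, hScard⟩ := Finset.exists_subset_card_eq hzcard
    have hSzero : ∀ j ∈ S, d j = 0 := fun j hj => (Finset.mem_filter.mp (hSsub hj)).2
    set M : Matrix (Fin n) (Fin n) ℂ :=
      Qᵀ * diagonal (fun j => if j ∈ S then (1 : ℂ) else 0) * Q with hM
    -- the perturbed family
    have key : ∀ ε : ℂ, ε ≠ 0 →
        (X + ε • M) ∈ {Y : Matrix (Fin n) (Fin n) ℂ | Yᵀ = Y ∧ Y.rank = i} := by
      intro ε hε
      have heq : X + ε • M =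
          Qᵀ * diagonal (fun j => d j + if j ∈ S then ε else 0) * Q := by
        rw [hXeq, hM]
        have hauxdiag : Matrix.diagonal (fun j => d j + if j ∈ S then ε else 0)
            = Matrix.diagonal d +
              ε • Matrix.diagonal (fun j => if j ∈ S then (1 : ℂ) else 0) := by
          ext a b
          rcases eq_or_ne a b with rfl | hab
          · by_cases h : a ∈ S <;> simp [h]
          · simp [Matrix.diagonal_apply_ne _ hab]
        rw [hauxdiag, Matrix.mul_add, Matrix.add_mul, Matrix.mul_smul, Matrix.smul_mul]
      constructor
      · rw [heq]
        simp only [Matrix.transpose_mul, Matrix.transpose_transpose,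
          Matrix.diagonal_transpose, Matrix.mul_assoc]
      · rw [heq, aux_rank_congr Q _ hQ, Matrix.rank_diagonal, Fintype.card_subtype]
        have : (Finset.univ.filter fun j => (d j + if j ∈ S then ε else 0) ≠ 0) =
            s ∪ S := by
          ext j
          simp only [Finset.mem_filter, Finset.mem_univ, true_and, Finset.mem_union, hs]
          by_cases hj : j ∈ S
          · simp [hj, hSzero j hj, hε]
          · simp [hj]
        rw [this, Finset.card_union_of_disjoint, hscard, hScard]
        · omega
        · rw [Finset.disjoint_left]
          intro j hjs hjS
          exact (Finset.mem_filter.mp hjs).2 (hSzero j hjS)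
    -- limit argument
    have htend : Filter.Tendsto (fun ε : ℂ => X + ε • M) (nhdsWithin 0 {0}ᶜ) (nhds X) := by
      have hcont : Continuous fun ε : ℂ => X + ε • M :=
        continuous_const.add (continuous_id.smul continuous_const)
      have := hcont.tendsto 0
      simpa using this.mono_left nhdsWithin_le_nhds
    exact mem_closure_of_tendsto htend
      (Filter.eventually_of_mem self_mem_nhdsWithin fun ε hε => key ε hε)
end

section
/- Let n be a positive integer and let i be a natural number with 2i ≤ n. In the space of skew-symmetric n×n complex matrices (a closed subspace of all n×n matrices with the standard topology), the topological closure of the set {X : Xᵀ = −X and rank X = 2i} equals the set {X : Xᵀ = −X and rank X ≤ 2i}. -/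
open Matrix

noncomputable section SkewAux

/-- The standard 2×2 symplectic block. -/
def Jtwo : Matrix (Fin 2) (Fin 2) ℂ := !![0, 1; -1, 0]

lemma Jtwo_transpose : Jtwoᵀ = -Jtwo := by
  ext k l; fin_cases k <;> fin_cases l <;> simp [Jtwo]

lemma Jtwo_mul_Jtwo : Jtwo * Jtwo = -1 := by
  ext k l; fin_cases k <;> fin_cases l <;>
    simp [Jtwo, Matrix.mul_apply, Fin.sum_univ_two, Matrix.one_apply]

lemma Jtwo_det : Jtwo.det = 1 := by
  simp [Jtwo, Matrix.det_fin_two]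

lemma Jtwo_rank : Jtwo.rank = 2 := by
  have h : IsUnit Jtwo := Matrix.isUnit_iff_isUnit_det _ |>.2 (by simp [Jtwo_det])
  simpa using Matrix.rank_of_isUnit _ h

/-- index equivalence. -/
def sumEquiv (n : ℕ) : Fin 2 ⊕ Fin n ≃ Fin (n + 2) :=
  finSumFinEquiv.trans (finCongr (by omega))

/-- Canonical skew matrix with `i` symplectic blocks. -/
def Jmat : (n i : ℕ) → Matrix (Fin n) (Fin n) ℂ
  | 0, _ => 0
  | 1, _ => 0
  | _ + 2, 0 => 0
  | n + 2, i + 1 =>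
    (fromBlocks Jtwo 0 0 (Jmat n i)).submatrix (sumEquiv n).symm (sumEquiv n).symm

lemma Jmat_succ (n i : ℕ) :
    Jmat (n + 2) (i + 1) =
      (fromBlocks Jtwo 0 0 (Jmat n i)).submatrix (sumEquiv n).symm (sumEquiv n).symm := by
  rfl

lemma Jmat_transpose (n i : ℕ) : (Jmat n i)ᵀ = -(Jmat n i) := by
  induction n using Nat.strong_induction_on generalizing i with
  | _ n IH =>
    match n, i with
    | 0, i => simp [Jmat]
    | 1, i => simp [Jmat]
    | n + 2, 0 => simp [Jmat]
    | n + 2, i + 1 =>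
      rw [Jmat_succ, transpose_submatrix, fromBlocks_transpose, Jtwo_transpose,
        IH n (by omega) i]
      ext k l
      cases hk : (sumEquiv n).symm k <;> cases hl : (sumEquiv n).symm l <;>
        simp [Matrix.submatrix_apply, hk, hl, Matrix.fromBlocks]

lemma finrank_submodule_prod {V W : Type*} [AddCommGroup V] [Module ℂ V] [AddCommGroup W]
    [Module ℂ W] [FiniteDimensional ℂ V] [FiniteDimensional ℂ W]
    (P : Submodule ℂ V) (Q : Submodule ℂ W) :
    Module.finrank ℂ (P.prod Q) = Module.finrank ℂ P + Module.finrank ℂ Q := by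
  have e : (P.prod Q) ≃ₗ[ℂ] P × Q :=
    { toFun := fun x => (⟨x.1.1, x.2.1⟩, ⟨x.1.2, x.2.2⟩)
      invFun := fun y => ⟨(y.1.1, y.2.1), ⟨y.1.2, y.2.2⟩⟩
      map_add' := fun x y => rfl
      map_smul' := fun c x => rfl
      left_inv := fun x => rfl
      right_inv := fun y => rfl }
  rw [e.finrank_eq, Module.finrank_prod]

lemma rank_fromBlocks_diag {p q : Type*} [Fintype p] [Fintype q] [DecidableEq p] [DecidableEq q]
    (A : Matrix p p ℂ) (D : Matrix q q ℂ) :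
    (fromBlocks A (0 : Matrix p q ℂ) (0 : Matrix q p ℂ) D).rank = A.rank + D.rank := by
  classical
  set e := LinearEquiv.sumArrowLequivProdArrow p q ℂ ℂ with he
  have key : (fromBlocks A (0 : Matrix p q ℂ) (0 : Matrix q p ℂ) D).mulVecLin
      = e.symm.toLinearMap ∘ₗ (A.mulVecLin.prodMap D.mulVecLin) ∘ₗ e.toLinearMap := by
    apply LinearMap.ext; intro v
    have hv : v = Sum.elim (v ∘ Sum.inl) (v ∘ Sum.inr) := by
      funext x; cases x <;> rfl
    conv_lhs => rw [Matrix.mulVecLin_apply, hv]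
    rw [fromBlocks_mulVec]
    simp only [Sum.elim_comp_inl, Sum.elim_comp_inr, Matrix.zero_mulVec, add_zero, zero_add]
    rfl
  have hr : LinearMap.range (A.mulVecLin.prodMap D.mulVecLin)
      = (LinearMap.range A.mulVecLin).prod (LinearMap.range D.mulVecLin) := by
    ext ⟨x, y⟩
    constructor
    · rintro ⟨⟨u, w⟩, h⟩
      rw [LinearMap.prodMap_apply, Prod.mk.injEq] at h
      exact ⟨⟨u, h.1⟩, ⟨w, h.2⟩⟩
    · rintro ⟨⟨u, hu⟩, ⟨w, hw⟩⟩
      exact ⟨(u, w), Prod.ext hu hw⟩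
  rw [Matrix.rank, key, LinearMap.range_comp, LinearMap.range_comp, LinearEquiv.range,
    Submodule.map_top, hr, LinearEquiv.finrank_map_eq, finrank_submodule_prod]
  rfl

lemma Jmat_rank : ∀ n i, 2 * i ≤ n → (Jmat n i).rank = 2 * i := by
  intro n
  induction n using Nat.strong_induction_on with
  | _ n IH =>
    match n with
    | 0 => intro i hi; have : i = 0 := by omega
           subst this; simp [Jmat]
    | 1 => intro i hi; have : i = 0 := by omega
           subst this; simp [Jmat]
    | n + 2 =>
      intro i hi
      match i with
      | 0 => simp [Jmat]
      | i + 1 =>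
        rw [Jmat_succ]
        rw [Matrix.rank_submatrix _ (sumEquiv n).symm (sumEquiv n).symm,
          rank_fromBlocks_diag, Jtwo_rank, IH n (by omega) i (by omega)]
        ring
open scoped ComplexOrder in
lemma eventually_rank_le {n : ℕ} (X : Matrix (Fin n) (Fin n) ℂ) :
    ∀ᶠ Y in nhds X, X.rank ≤ Y.rank := by
  classical
  set r := X.rank with hrdef
  have hfr : Module.finrank ℂ (LinearMap.range X.mulVecLin) = r := rfl
  let b : Module.Basis (Fin r) ℂ (LinearMap.range X.mulVecLin) := Module.finBasisOfFinrankEq ℂ _ hfr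
  have hmem : ∀ k, ((b k : (Fin n → ℂ))) ∈ LinearMap.range X.mulVecLin := fun k => (b k).2
  choose u hu using hmem
  set B : Matrix (Fin n) (Fin r) ℂ := Matrix.of fun j k => u k j with hBdef
  have hXB : ∀ j k, (X * B) j k = (b k : Fin n → ℂ) j := by
    intro j k
    have := congrFun (hu k) j
    simpa [Matrix.mul_apply, Matrix.mulVecLin_apply, Matrix.mulVec, dotProduct,
      hBdef] using this
  have hrankXB : (X * B).rank = r := by
    rw [Matrix.rank_eq_finrank_span_cols]
    have hc : Set.range (X * B)ᵀ = (LinearMap.range X.mulVecLin).subtype '' (Set.range b) := by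
      ext v
      constructor
      · rintro ⟨k, rfl⟩
        exact ⟨b k, ⟨k, rfl⟩, by ext j; simp [hXB j k]⟩
      · rintro ⟨w, ⟨k, rfl⟩, rfl⟩
        exact ⟨k, by ext j; simp [hXB j k]⟩
    show Module.finrank ℂ (Submodule.span ℂ (Set.range (X * B)ᵀ)) = r
    rw [hc, ← Submodule.map_span, b.span_eq, Submodule.map_top, Submodule.range_subtype]
    exact hfr
  have hMdet : IsUnit (((X * B)ᴴ * (X * B)).det) := by
    have h1 : ((X * B)ᴴ * (X * B)).rank = r := by
      rw [Matrix.rank_conjTranspose_mul_self, hrankXB]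
    have hsurj : Function.Surjective ((X * B)ᴴ * (X * B)).mulVecLin := by
      rw [← LinearMap.range_eq_top]
      apply Submodule.eq_top_of_finrank_eq
      show ((X * B)ᴴ * (X * B)).rank = _
      rw [h1, Module.finrank_fintype_fun_eq_card, Fintype.card_fin]
    have hinj : Function.Injective (((X * B)ᴴ * (X * B)).mulVec) := by
      have := (LinearMap.injective_iff_surjective
        (f := ((X * B)ᴴ * (X * B)).mulVecLin)).2 hsurj
      simpa [← Matrix.coe_mulVecLin] using this
    exact Matrix.isUnit_iff_isUnit_det _ |>.1 (Matrix.mulVec_injective_iff_isUnit.1 hinj)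
  have hcont : Continuous fun Y : Matrix (Fin n) (Fin n) ℂ => ((X * B)ᴴ * Y * B).det :=
    ((continuous_const.matrix_mul continuous_id).matrix_mul continuous_const).matrix_det
  have h0 : ((X * B)ᴴ * X * B).det ≠ 0 := by
    rw [Matrix.mul_assoc]
    exact hMdet.ne_zero
  have hev : ∀ᶠ Y in nhds X, ((X * B)ᴴ * Y * B).det ≠ 0 :=
    hcont.continuousAt.eventually_ne h0
  filter_upwards [hev] with Y hY
  have h2 : ((X * B)ᴴ * Y * B).rank = r := by
    have := Matrix.rank_of_isUnit ((X * B)ᴴ * Y * B)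
      (Matrix.isUnit_iff_isUnit_det _ |>.2 (isUnit_iff_ne_zero.2 hY))
    simpa using this
  calc r = ((X * B)ᴴ * Y * B).rank := h2.symm
    _ ≤ (Y * B).rank := by rw [Matrix.mul_assoc]; exact Matrix.rank_mul_le_right _ _
    _ ≤ Y.rank := Matrix.rank_mul_le_left _ _

lemma isClosed_skew_rank_le (n k : ℕ) :
    IsClosed {X : Matrix (Fin n) (Fin n) ℂ | Xᵀ = -X ∧ X.rank ≤ k} := by
  have h1 : IsClosed {X : Matrix (Fin n) (Fin n) ℂ | Xᵀ = -X} :=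
    isClosed_eq (continuous_id.matrix_transpose) (continuous_id.neg)
  have h2 : IsClosed {X : Matrix (Fin n) (Fin n) ℂ | X.rank ≤ k} := by
    refine isClosed_of_closure_subset ?_
    intro X hX
    rcases mem_closure_iff_nhds.1 hX _ (eventually_rank_le X) with ⟨Y, hY1, hY2⟩
    simp only [Set.mem_setOf_eq] at hY1 hY2
    exact hY1.trans hY2
  exact h1.inter h2
lemma eval_charpoly' {n : ℕ} (M : Matrix (Fin n) (Fin n) ℂ) (t : ℂ) :
    (M.charpoly).eval t = (t • (1 : Matrix (Fin n) (Fin n) ℂ) - M).det := by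
  rw [Matrix.charpoly, show (Polynomial.eval t : Polynomial ℂ → ℂ)
    = (Polynomial.evalRingHom t : Polynomial ℂ →+* ℂ) from rfl, RingHom.map_det]
  congr 1
  ext k l
  by_cases h : k = l
  · subst h
    simp [Matrix.charmatrix_apply_eq, Matrix.one_apply]
  · simp [Matrix.charmatrix_apply_ne _ _ _ h, Matrix.one_apply, h]

lemma finite_bad {n : ℕ} (Q : Matrix (Fin n) (Fin n) ℂ) :
    {t : ℂ | ¬ IsUnit ((Q + t • 1 : Matrix (Fin n) (Fin n) ℂ)).det}.Finite := by
  apply Set.Finite.subset (Polynomial.finite_setOf_isRoot ((-Q).charpoly_monic.ne_zero))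
  intro t ht
  simp only [Set.mem_setOf_eq, isUnit_iff_ne_zero, not_not] at ht
  show ((-Q).charpoly).IsRoot t
  rw [Polynomial.IsRoot, eval_charpoly', sub_neg_eq_add, add_comm]
  exact ht

lemma mem_closure_skew (n i : ℕ) (hi : 2 * i ≤ n) (Q : Matrix (Fin n) (Fin n) ℂ) :
    Qᵀ * Jmat n i * Q ∈ closure {X : Matrix (Fin n) (Fin n) ℂ | Xᵀ = -X ∧ X.rank = 2 * i} := by
  rw [mem_closure_iff_nhds]
  intro U hU
  set f : ℂ → Matrix (Fin n) (Fin n) ℂ :=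
    fun t => (Q + t • 1)ᵀ * Jmat n i * (Q + t • 1) with hf
  have h1 : Continuous fun t : ℂ => Q + t • (1 : Matrix (Fin n) (Fin n) ℂ) :=
    continuous_const.add (continuous_id.smul continuous_const)
  have hfc : Continuous f := (h1.matrix_transpose.matrix_mul continuous_const).matrix_mul h1
  have hf0 : f 0 = Qᵀ * Jmat n i * Q := by simp [hf]
  have hV : f ⁻¹' U ∈ nhds (0 : ℂ) :=
    hfc.continuousAt.preimage_mem_nhds (by rw [hf0]; exact hU)
  have ev1 : ∀ᶠ t in nhdsWithin (0 : ℂ) {0}ᶜ, f t ∈ U :=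
    mem_nhdsWithin_of_mem_nhds hV
  have ev2 : ∀ᶠ t in nhdsWithin (0 : ℂ) {0}ᶜ, IsUnit ((Q + t • 1 :
      Matrix (Fin n) (Fin n) ℂ)).det := by
    set bad := {t : ℂ | ¬ IsUnit ((Q + t • 1 : Matrix (Fin n) (Fin n) ℂ)).det} with hbad
    have hcl : IsClosed (bad \ {0}) := ((finite_bad Q).subset Set.diff_subset).isClosed
    have h0 : (0 : ℂ) ∉ bad \ {0} := fun h => h.2 rfl
    have hmem : (bad \ {0})ᶜ ∈ nhds (0 : ℂ) := hcl.isOpen_compl.mem_nhds h0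
    have e1 : ∀ᶠ t in nhdsWithin (0 : ℂ) {0}ᶜ, t ∈ (bad \ {0})ᶜ :=
      mem_nhdsWithin_of_mem_nhds hmem
    have e2 : ∀ᶠ t in nhdsWithin (0 : ℂ) {0}ᶜ, t ∈ ({0} : Set ℂ)ᶜ :=
      self_mem_nhdsWithin
    filter_upwards [e1, e2] with t ht1 ht2
    by_contra hcon
    exact ht1 ⟨hcon, ht2⟩
  obtain ⟨t, htU, htn⟩ := (ev1.and ev2).exists
  refine ⟨f t, htU, ?_, ?_⟩
  · show (f t)ᵀ = -(f t)
    have key : ((Q + t • 1)ᵀ * Jmat n i * (Q + t • 1))ᵀ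
        = (Q + t • 1)ᵀ * (Jmat n i)ᵀ * (Q + t • 1) := by
      rw [Matrix.transpose_mul, Matrix.transpose_mul, Matrix.transpose_transpose,
        Matrix.mul_assoc]
    show ((Q + t • 1)ᵀ * Jmat n i * (Q + t • 1))ᵀ = _
    rw [key, Jmat_transpose]
    simp [Matrix.mul_neg, Matrix.neg_mul, hf, Matrix.transpose_add, Matrix.transpose_smul,
      Matrix.transpose_one]
  · show (f t).rank = 2 * i
    have hdt : IsUnit ((Q + t • 1 : Matrix (Fin n) (Fin n) ℂ))ᵀ.det := by
      rw [Matrix.det_transpose]; exact htn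
    show ((Q + t • 1)ᵀ * Jmat n i * (Q + t • 1)).rank = 2 * i
    rw [Matrix.rank_mul_eq_left_of_isUnit_det _ _ htn,
      Matrix.rank_mul_eq_right_of_isUnit_det _ _ hdt, Jmat_rank n i hi]
lemma skew_diag_zero {p : Type*} {X : Matrix p p ℂ} (h : Xᵀ = -X) (k : p) : X k k = 0 := by
  have h1 := congrFun (congrFun h k) k
  simp only [Matrix.transpose_apply, Matrix.neg_apply] at h1
  linear_combination h1 / 2

lemma rank_zero_eq_zero {N : ℕ} {X : Matrix (Fin N) (Fin N) ℂ} (h : X.rank = 0) : X = 0 := by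
  have hbot : LinearMap.range X.mulVecLin = ⊥ := by
    rw [← Submodule.finrank_eq_zero (R := ℂ)]
    exact h
  have hf : X.mulVecLin = 0 := LinearMap.range_eq_bot.1 hbot
  ext k l
  have h0 : X.mulVec (Pi.single l 1) = 0 := by
    rw [← Matrix.mulVecLin_apply, hf]; rfl
  have := congrFun h0 k
  simpa [Matrix.mulVec_single] using this

lemma exists_perm_map {N : ℕ} {i₀ i₁ a b : Fin N} (h01 : i₀ ≠ i₁) (hab : a ≠ b) :
    ∃ σ : Equiv.Perm (Fin N), σ i₀ = a ∧ σ i₁ = b := by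
  classical
  set τ := Equiv.swap i₀ a with hτ
  set b' := τ.symm b with hb'
  have hb'0 : b' ≠ i₀ := by
    intro h
    have hba : b = τ i₀ := by rw [← h, hb', Equiv.apply_symm_apply]
    rw [hτ, Equiv.swap_apply_left] at hba
    exact hab hba.symm
  set ρ := Equiv.swap i₁ b' with hρ
  refine ⟨ρ.trans τ, ?_, ?_⟩
  · show τ (ρ i₀) = a
    have hfix : ρ i₀ = i₀ := Equiv.swap_apply_of_ne_of_ne h01 (Ne.symm hb'0)
    rw [hfix, hτ, Equiv.swap_apply_left]
  · show τ (ρ i₁) = b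
    have : ρ i₁ = b' := Equiv.swap_apply_left _ _
    rw [this, hb', Equiv.apply_symm_apply]

lemma canon : ∀ N : ℕ, ∀ (i : ℕ) (X : Matrix (Fin N) (Fin N) ℂ), Xᵀ = -X → X.rank ≤ 2 * i →
    2 * i ≤ N → ∃ Q : Matrix (Fin N) (Fin N) ℂ, X = Qᵀ * Jmat N i * Q := by
  intro N
  induction N using Nat.strong_induction_on with
  | _ N IH =>
  intro i X hskew hrank hiN
  by_cases hX0 : X = 0
  · exact ⟨0, by simp [hX0]⟩
  have hex : ∃ a b, X a b ≠ 0 := by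
    by_contra hc
    push_neg at hc
    exact hX0 (by ext a b; simpa using hc a b)
  obtain ⟨a, b, hab0⟩ := hex
  have hab : a ≠ b := by
    rintro rfl
    exact hab0 (skew_diag_zero hskew a)
  have h2N : 2 ≤ N := by
    by_contra hlt
    push_neg at hlt
    interval_cases N
    · exact a.elim0
    · exact hab (Subsingleton.elim a b)
  obtain ⟨m, rfl⟩ : ∃ m, N = m + 2 := ⟨N - 2, by omega⟩
  obtain ⟨i', rfl⟩ : ∃ i', i = i' + 1 := by
    refine ⟨i - 1, ?_⟩
    rcases Nat.eq_zero_or_pos i with h0 | h0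
    · exfalso
      apply hX0
      apply rank_zero_eq_zero
      omega
    · omega
  set eS := sumEquiv m with heSdef
  set i₀ := eS (Sum.inl 0) with hi₀
  set i₁ := eS (Sum.inl 1) with hi₁
  have h01 : i₀ ≠ i₁ := by
    rw [hi₀, hi₁]
    exact eS.injective.ne_iff.2 (by simp)
  obtain ⟨σ, hσ0, hσ1⟩ := exists_perm_map h01 hab
  set ee : Fin 2 ⊕ Fin m ≃ Fin (m + 2) := eS.trans σ with heedef
  set W := X.submatrix ee ee with hWdef
  have hWskew : Wᵀ = -W := by
    ext k l
    have := congrFun (congrFun hskew (ee k)) (ee l)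
    simpa [hWdef] using this
  set cc := X a b with hccdef
  have hccne : cc ≠ 0 := hab0
  have hWc : W (Sum.inl 0) (Sum.inl 1) = cc := by
    show X (ee (Sum.inl 0)) (ee (Sum.inl 1)) = cc
    have e0 : ee (Sum.inl 0) = a := by
      show σ (eS (Sum.inl 0)) = a
      rw [← hi₀, hσ0]
    have e1 : ee (Sum.inl 1) = b := by
      show σ (eS (Sum.inl 1)) = b
      rw [← hi₁, hσ1]
    rw [e0, e1]
  set A := W.toBlocks₁₁ with hA
  set B := W.toBlocks₁₂ with hB
  set D := W.toBlocks₂₂ with hD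
  have hWblocks : W = fromBlocks A B (-Bᵀ) D := by
    have h2 : W.toBlocks₂₁ = -Bᵀ := by
      ext k l
      have := congrFun (congrFun hWskew (Sum.inl l)) (Sum.inr k)
      simp only [Matrix.transpose_apply, Matrix.neg_apply] at this
      simp [Matrix.toBlocks₂₁, Matrix.toBlocks₁₂, hB, this]
    rw [← h2, hA, hB, hD, fromBlocks_toBlocks]
  have hW10 : W (Sum.inl 1) (Sum.inl 0) = -cc := by
    have := congrFun (congrFun hWskew (Sum.inl 0)) (Sum.inl 1)
    simp only [Matrix.transpose_apply, Matrix.neg_apply] at this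
    rw [this, hWc]
  have hAval : A = cc • Jtwo := by
    ext k l
    fin_cases k <;> fin_cases l
    · show W (Sum.inl 0) (Sum.inl 0) = _
      rw [skew_diag_zero hWskew]
      simp [Jtwo]
    · show W (Sum.inl 0) (Sum.inl 1) = _
      rw [hWc]
      simp [Jtwo]
    · show W (Sum.inl 1) (Sum.inl 0) = _
      rw [hW10]
      simp [Jtwo]
    · show W (Sum.inl 1) (Sum.inl 1) = _
      rw [skew_diag_zero hWskew]
      simp [Jtwo]
  set E := cc⁻¹ • (Jtwo * B) with hE
  have hAE : A * E = -B := by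
    rw [hAval, hE, Matrix.smul_mul, Matrix.mul_smul, smul_smul, mul_inv_cancel₀ hccne, one_smul,
      ← Matrix.mul_assoc, Jtwo_mul_Jtwo]
    simp
  have hAskew : Aᵀ = -A := by
    rw [hAval, Matrix.transpose_smul, Jtwo_transpose]
    simp
  have hEA : Eᵀ * A = Bᵀ := by
    calc Eᵀ * A = -(Eᵀ * Aᵀ) := by rw [hAskew, Matrix.mul_neg, neg_neg]
    _ = -((A * E)ᵀ) := by rw [Matrix.transpose_mul]
    _ = Bᵀ := by rw [hAE]; simp
  set M₁ : Matrix (Fin 2 ⊕ Fin m) (Fin 2 ⊕ Fin m) ℂ := fromBlocks 1 E 0 1 with hM₁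
  set D₂ := Eᵀ * B + D with hD₂
  have hW₂ : M₁ᵀ * W * M₁ = fromBlocks A 0 0 D₂ := by
    rw [hM₁, hWblocks, fromBlocks_transpose, fromBlocks_multiply, fromBlocks_multiply]
    rw [hD₂]
    simp only [Matrix.transpose_one, Matrix.transpose_zero, Matrix.one_mul, Matrix.mul_one,
      Matrix.zero_mul, Matrix.mul_zero, add_zero, zero_add, Matrix.add_mul, Matrix.mul_add]
    rw [hEA, hAE]
    simp
  set g : Matrix (Fin 2) (Fin 2) ℂ := Matrix.diagonal ![1, cc⁻¹] with hg
  have hgA : g * A * g = Jtwo := by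
    rw [hAval]
    ext k l
    fin_cases k <;> fin_cases l <;>
      simp [hg, Jtwo, Matrix.mul_apply, Fin.sum_univ_two, Matrix.diagonal] <;>
      field_simp
  set G : Matrix (Fin 2 ⊕ Fin m) (Fin 2 ⊕ Fin m) ℂ := fromBlocks g 0 0 1 with hG
  have hW₃ : Gᵀ * (fromBlocks A 0 0 D₂) * G = fromBlocks Jtwo 0 0 D₂ := by
    have hgsymm : gᵀ = g := by rw [hg, Matrix.diagonal_transpose]
    rw [hG, fromBlocks_transpose, fromBlocks_multiply, fromBlocks_multiply, hgsymm]
    simp only [Matrix.transpose_one, Matrix.transpose_zero, Matrix.one_mul, Matrix.mul_one,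
      Matrix.zero_mul, Matrix.mul_zero, add_zero, zero_add]
    rw [hgA]
  set H := M₁ * G with hH
  have hW₃X : Hᵀ * W * H = fromBlocks Jtwo 0 0 D₂ := by
    rw [hH, Matrix.transpose_mul, ← hW₃, ← hW₂]
    simp only [Matrix.mul_assoc]
  have hrk3 : (fromBlocks Jtwo 0 0 D₂).rank ≤ 2 * (i' + 1) := by
    rw [← hW₃X]
    calc (Hᵀ * W * H).rank ≤ (Hᵀ * W).rank := Matrix.rank_mul_le_left _ _
      _ ≤ W.rank := Matrix.rank_mul_le_right _ _
      _ = X.rank := by rw [hWdef, Matrix.rank_submatrix]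
      _ ≤ _ := hrank
  have hrkD₂ : D₂.rank ≤ 2 * i' := by
    have hblock := rank_fromBlocks_diag Jtwo D₂
    rw [Jtwo_rank] at hblock
    omega
  have hD₂skew : D₂ᵀ = -D₂ := by
    have hsk3 : (fromBlocks Jtwo 0 0 D₂)ᵀ = -(fromBlocks Jtwo 0 0 D₂) := by
      rw [← hW₃X]
      calc (Hᵀ * W * H)ᵀ = Hᵀ * (Wᵀ * H) := by
            simp only [Matrix.transpose_mul, Matrix.transpose_transpose, Matrix.mul_assoc]
      _ = -(Hᵀ * W * H) := by rw [hWskew]; simp [Matrix.neg_mul, Matrix.mul_neg,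
            Matrix.mul_assoc]
    have h22 := congrArg Matrix.toBlocks₂₂ hsk3
    simpa [fromBlocks_transpose, fromBlocks_neg] using h22
  obtain ⟨Q', hQ'⟩ := IH m (by omega) i' D₂ hD₂skew hrkD₂ (by omega)
  set K : Matrix (Fin 2 ⊕ Fin m) (Fin 2 ⊕ Fin m) ℂ := fromBlocks 1 0 0 Q' with hK
  set JJ := fromBlocks Jtwo 0 0 (Jmat m i') with hJJ
  have hKW : fromBlocks Jtwo 0 0 D₂ = Kᵀ * JJ * K := by
    rw [hK, hJJ, fromBlocks_transpose, fromBlocks_multiply, fromBlocks_multiply, hQ']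
    simp [Matrix.mul_assoc]
  set M₁inv : Matrix (Fin 2 ⊕ Fin m) (Fin 2 ⊕ Fin m) ℂ := fromBlocks 1 (-E) 0 1 with hM₁inv
  set Ginv : Matrix (Fin 2 ⊕ Fin m) (Fin 2 ⊕ Fin m) ℂ :=
    fromBlocks (Matrix.diagonal ![1, cc]) 0 0 1 with hGinv
  have hM₁M : M₁ * M₁inv = 1 := by
    rw [hM₁, hM₁inv, fromBlocks_multiply]
    simp [fromBlocks_one]
  have hGG : G * Ginv = 1 := by
    rw [hG, hGinv, fromBlocks_multiply]
    have hd : g * Matrix.diagonal ![1, cc] = 1 := by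
      rw [hg, Matrix.diagonal_mul_diagonal]
      ext k l
      fin_cases k <;> fin_cases l <;> simp [Matrix.diagonal, Matrix.one_apply] <;>
        field_simp
    rw [hd]
    simp [fromBlocks_one]
  set Hinv := Ginv * M₁inv with hHinvdef
  have hHinv : H * Hinv = 1 := by
    rw [hH, hHinvdef]
    calc M₁ * G * (Ginv * M₁inv) = M₁ * (G * Ginv) * M₁inv := by
          simp only [Matrix.mul_assoc]
    _ = 1 := by rw [hGG, Matrix.mul_one, hM₁M]
  set L := K * Hinv with hL
  have hWrecover : W = Lᵀ * JJ * L := by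
    have h1 : Hinvᵀ * (Hᵀ * W * H) * Hinv = W := by
      calc Hinvᵀ * (Hᵀ * W * H) * Hinv = (H * Hinv)ᵀ * W * (H * Hinv) := by
            simp only [Matrix.transpose_mul, Matrix.mul_assoc]
      _ = W := by rw [hHinv]; simp
    rw [← h1, hW₃X, hKW, hL]
    simp only [Matrix.transpose_mul, Matrix.mul_assoc]
  refine ⟨L.submatrix eS.symm ee.symm, ?_⟩
  have hX : X = (Lᵀ * JJ * L).submatrix ee.symm ee.symm := by
    rw [← hWrecover, hWdef, Matrix.submatrix_submatrix]
    simp [Equiv.self_comp_symm]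
  rw [hX]
  have hJ : Jmat (m + 2) (i' + 1) = JJ.submatrix eS.symm eS.symm := by
    rw [Jmat_succ, hJJ, heSdef]
  rw [hJ, Matrix.transpose_submatrix, Matrix.submatrix_mul_equiv, Matrix.submatrix_mul_equiv]
end SkewAux

/-- In the space of skew-symmetric `n × n` complex matrices (a closed subspace of all `n × n`
matrices with the standard topology), for `2i ≤ n`, the topological closure of the set of
skew-symmetric matrices of rank exactly `2i` equals the set of skew-symmetric matrices of
rank at most `2i`. -/
theorem closure_skew_rank_eq_eq_skew_rank_le (n i : ℕ) (hn : 0 < n) (hi : 2 * i ≤ n) :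
    closure {X : Matrix (Fin n) (Fin n) ℂ | Xᵀ = -X ∧ X.rank = 2 * i} =
      {X : Matrix (Fin n) (Fin n) ℂ | Xᵀ = -X ∧ X.rank ≤ 2 * i} := by
  apply subset_antisymm
  · exact closure_minimal (fun X hX => ⟨hX.1, hX.2.le⟩) (isClosed_skew_rank_le n (2 * i))
  · rintro X ⟨hskew, hrank⟩
    obtain ⟨Q, hQ⟩ := canon n i X hskew hrank hi
    rw [hQ]
    exact mem_closure_skew n i hi Q
end
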